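/- Let n > m ≥ 1 be integers and 0 ≤ ν, μ ≤ m. Then a(ν,μ,m,n) = b(ν,μ,m,n), where a(ν,μ,m,n) = C(n−1+ν,ν)·C(n,m−ν)·C(n−1+m−μ,m−μ)·C(n,μ), and b(ν,μ,m,n) = D_n(ν+1, n−1−μ)·D_n(m−μ+1, n−1−m+ν) + (1−δ_{ν,m})(1−δ_{μ,m})·D_n(ν+1, n−1−μ)·D_n(m−μ, n−m+ν) + (1−δ_{ν,0})(1−δ_{μ,0})·D_n(ν, n−μ)·D_n(m−μ+1, n−1−m+ν) + (1−δ_{ν,0})(1−δ_{μ,0})(1−δ_{ν,m})(1−δ_{μ,m})·D_n(ν, n−μ)·D_n(m−μ, n−m+ν). -/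

import Mathlib

/-- `Dn n a b` is the paper's `D_n(a,b)`, i.e. with `a = α+1`:
`D_n(α+1,β) = (n/(α+β+1))·C(n+α,α)·C(n−1,β)` if `α ≥ 0` and `0 ≤ β ≤ n−1`, and `0` otherwise. -/
def Dn (n : ℕ) (a b : ℤ) : ℚ :=
  if 1 ≤ a ∧ 0 ≤ b ∧ b ≤ (n : ℤ) - 1 then
    (n : ℚ) / ((a : ℚ) + (b : ℚ)) *
      ((((n : ℤ) + (a - 1)).toNat.choose (a - 1).toNat : ℚ)) *
      ((((n : ℤ) - 1).toNat.choose b.toNat : ℚ))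
  else 0

lemma Dn1 (n ν μ : ℕ) (hn : 1 ≤ n) (hμ : μ < n) :
    Dn n ((ν:ℤ)+1) ((n:ℤ)-1-(μ:ℤ)) =
      (n:ℚ)/((n:ℚ)+(ν:ℚ)-(μ:ℚ)) * ((n+ν).choose ν : ℚ) * ((n-1).choose μ : ℚ) := by
  unfold Dn
  rw [if_pos ⟨by omega, by omega, by omega⟩]
  rw [show ((n:ℤ) + ((ν:ℤ)+1-1)).toNat = n+ν by omega,
      show (((ν:ℤ)+1-1)).toNat = ν by omega,
      show (((n:ℤ)-1)).toNat = n-1 by omega,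
      show (((n:ℤ)-1-(μ:ℤ))).toNat = n-1-μ by omega]
  rw [show n-1-μ = (n-1)-μ from rfl, Nat.choose_symm (by omega : μ ≤ n-1)]
  rw [show (((ν:ℤ)+1 : ℤ):ℚ) = (ν:ℚ)+1 by push_cast; ring,
      show ((((n:ℤ)-1-(μ:ℤ)) : ℤ):ℚ) = (n:ℚ)-1-μ by push_cast; ring]
  ring

lemma Dn2 (n ν μ : ℕ) (hν : 1 ≤ ν) (hμ1 : 1 ≤ μ) (hμ : μ < n) :
    Dn n (ν:ℤ) ((n:ℤ)-(μ:ℤ)) =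
      (n:ℚ)/((n:ℚ)+(ν:ℚ)-(μ:ℚ)) * ((n+ν-1).choose (ν-1) : ℚ) * ((n-1).choose (μ-1) : ℚ) := by
  unfold Dn
  rw [if_pos ⟨by omega, by omega, by omega⟩]
  rw [show ((n:ℤ) + ((ν:ℤ)-1)).toNat = n+ν-1 by omega,
      show (((ν:ℤ)-1)).toNat = ν-1 by omega,
      show (((n:ℤ)-1)).toNat = n-1 by omega,
      show (((n:ℤ)-(μ:ℤ))).toNat = n-μ by omega]
  rw [show n-μ = (n-1)-(μ-1) by omega, Nat.choose_symm (by omega : μ-1 ≤ n-1)]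
  rw [show (((ν:ℤ) : ℤ):ℚ) = (ν:ℚ) by push_cast; ring,
      show ((((n:ℤ)-(μ:ℤ)) : ℤ):ℚ) = (n:ℚ)-μ by push_cast; ring]
  ring

lemma keyFull (n ν μ : ℕ) (hn : 1 ≤ n) (hμ : μ < n) :
    Dn n ((ν:ℤ)+1) ((n:ℤ)-1-(μ:ℤ))
      + (1 - if ν = 0 then (1:ℚ) else 0) * (1 - if μ = 0 then (1:ℚ) else 0) *
        Dn n (ν:ℤ) ((n:ℤ)-(μ:ℤ))
    = ((n+ν-1).choose ν : ℚ) * (n.choose μ : ℚ) := by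
  have hμq : (μ:ℚ) < (n:ℚ) := by exact_mod_cast hμ
  have hνq : (0:ℚ) ≤ (ν:ℚ) := Nat.cast_nonneg ν
  rw [Dn1 n ν μ hn hμ]
  by_cases hν0 : ν = 0
  · subst hν0
    simp only [if_pos rfl, if_true, sub_self, zero_mul, mul_zero, add_zero]
    have e := congrArg (fun x : ℕ => (x:ℚ)) (Nat.choose_mul_succ_eq (n-1) μ)
    rw [show n-1+1 = n by omega] at e
    push_cast [Nat.cast_sub hμ.le, Nat.cast_sub (by omega : 1 ≤ n)] at e
    simp only [Nat.add_zero, Nat.choose_zero_right, Nat.cast_one, Nat.cast_zero]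
    have hs' : (n:ℚ)-(μ:ℚ) ≠ 0 := by linarith
    rw [show (n:ℚ)+0-(μ:ℚ) = (n:ℚ)-μ by ring]
    field_simp
    linear_combination e
  · by_cases hμ0 : μ = 0
    · subst hμ0
      simp only [if_pos rfl, if_true, sub_self, mul_zero, zero_mul, add_zero]
      have e := congrArg (fun x : ℕ => (x:ℚ)) (Nat.choose_mul_succ_eq (n+ν-1) ν)
      rw [show n+ν-1+1 = n+ν by omega, show n+ν-ν = n by omega] at e
      push_cast at e
      simp only [Nat.choose_zero_right, Nat.cast_one, Nat.cast_zero]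
      have hs' : (n:ℚ)+(ν:ℚ) ≠ 0 := by linarith
      rw [show (n:ℚ)+(ν:ℚ)-0 = (n:ℚ)+ν by ring]
      field_simp
      linear_combination -e
    · rw [if_neg hν0, if_neg hμ0, Dn2 n ν μ (by omega) (by omega) hμ]
      obtain ⟨a, rfl⟩ : ∃ a, ν = a+1 := ⟨ν-1, by omega⟩
      obtain ⟨b, rfl⟩ : ∃ b, μ = b+1 := ⟨μ-1, by omega⟩
      obtain ⟨c, rfl⟩ : ∃ c, n = c+1 := ⟨n-1, by omega⟩
      have hbc : b ≤ c := by omega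
      have e1 : ((c+1+(a+1)).choose (a+1) : ℚ)
          = ((c+a+1).choose a : ℚ) + ((c+a+1).choose (a+1) : ℚ) := by
        rw [show c+1+(a+1) = (c+a+1)+1 by ring]
        exact_mod_cast congrArg (fun x : ℕ => (x:ℚ)) (Nat.choose_succ_succ (c+a+1) a)
      have e2 : ((c+a+1).choose (a+1) : ℚ) * ((a:ℚ)+1) = ((c+a+1).choose a : ℚ) * ((c:ℚ)+1) := by
        have e := congrArg (fun x : ℕ => (x:ℚ)) (Nat.choose_succ_right_eq (c+a+1) a)
        rw [show c+a+1-a = c+1 by omega] at e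
        push_cast at e
        linarith
      have e3 : ((c:ℕ).choose (b+1) : ℚ) * ((b:ℚ)+1) = ((c:ℕ).choose b : ℚ) * ((c:ℚ) - b) := by
        have e := congrArg (fun x : ℕ => (x:ℚ)) (Nat.choose_succ_right_eq c b)
        push_cast [Nat.cast_sub hbc] at e
        linarith
      have e4 : (((c+1:ℕ)).choose (b+1) : ℚ) = ((c:ℕ).choose b : ℚ) + ((c:ℕ).choose (b+1) : ℚ) := by
        exact_mod_cast congrArg (fun x : ℕ => (x:ℚ)) (Nat.choose_succ_succ c b)
      simp only [show c+1+(a+1)-1 = c+a+1 from by omega, show a+1-1 = a from rfl,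
        show b+1-1 = b from rfl, show c+1-1 = c from rfl]
      have hs : ((c:ℚ)+1) + ((a:ℚ)+1) - ((b:ℚ)+1) ≠ 0 := by
        push_cast at hμq
        linarith [Nat.cast_nonneg (α := ℚ) a]
      push_cast
      field_simp
      linear_combination ((c:ℚ)+1) * ((c:ℕ).choose (b+1):ℚ) * e1
        - (((c+a+1).choose (a+1):ℚ)) * (((c:ℚ)+1)+((a:ℚ)+1)-((b:ℚ)+1)) * e4
        - (((c:ℕ).choose (b+1):ℚ) + ((c:ℕ).choose b:ℚ)) * e2
        + (((c+a+1).choose (a+1):ℚ)) * e3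

/-- For integers `n > m ≥ 1` and `0 ≤ ν, μ ≤ m`: `a(ν,μ,m,n) = b(ν,μ,m,n)`. -/
theorem stmt11 : ∀ m n ν μ : ℕ, 1 ≤ m → m < n → ν ≤ m → μ ≤ m →
    (((n - 1 + ν).choose ν * n.choose (m - ν) *
        (n - 1 + m - μ).choose (m - μ) * n.choose μ : ℕ) : ℚ) =
      Dn n ((ν : ℤ) + 1) ((n : ℤ) - 1 - (μ : ℤ)) *
          Dn n ((m : ℤ) - (μ : ℤ) + 1) ((n : ℤ) - 1 - (m : ℤ) + (ν : ℤ))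
      + (1 - (if ν = m then (1 : ℚ) else 0)) * (1 - (if μ = m then (1 : ℚ) else 0)) *
          Dn n ((ν : ℤ) + 1) ((n : ℤ) - 1 - (μ : ℤ)) *
          Dn n ((m : ℤ) - (μ : ℤ)) ((n : ℤ) - (m : ℤ) + (ν : ℤ))
      + (1 - (if ν = 0 then (1 : ℚ) else 0)) * (1 - (if μ = 0 then (1 : ℚ) else 0)) *
          Dn n (ν : ℤ) ((n : ℤ) - (μ : ℤ)) *
          Dn n ((m : ℤ) - (μ : ℤ) + 1) ((n : ℤ) - 1 - (m : ℤ) + (ν : ℤ))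
      + (1 - (if ν = 0 then (1 : ℚ) else 0)) * (1 - (if μ = 0 then (1 : ℚ) else 0)) *
          (1 - (if ν = m then (1 : ℚ) else 0)) * (1 - (if μ = m then (1 : ℚ) else 0)) *
          Dn n (ν : ℤ) ((n : ℤ) - (μ : ℤ)) *
          Dn n ((m : ℤ) - (μ : ℤ)) ((n : ℤ) - (m : ℤ) + (ν : ℤ)) := by
  intro m n ν μ hm hmn hν hμ
  have h1 := keyFull n ν μ (by omega) (by omega)
  have h2 := keyFull n (m-μ) (m-ν) (by omega) (by omega)
  rw [show (m:ℤ)-(μ:ℤ) = ((m-μ:ℕ):ℤ) by omega,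
      show (n:ℤ)-1-(m:ℤ)+(ν:ℤ) = (n:ℤ)-1-((m-ν:ℕ):ℤ) by omega,
      show (n:ℤ)-(m:ℤ)+(ν:ℤ) = (n:ℤ)-((m-ν:ℕ):ℤ) by omega,
      show (if μ = m then (1:ℚ) else 0) = (if m-μ = 0 then (1:ℚ) else 0) by
        rcases eq_or_ne μ m with h|h
        · rw [if_pos h, if_pos (by omega)]
        · rw [if_neg h, if_neg (by omega)],
      show (if ν = m then (1:ℚ) else 0) = (if m-ν = 0 then (1:ℚ) else 0) by
        rcases eq_or_ne ν m with h|h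
        · rw [if_pos h, if_pos (by omega)]
        · rw [if_neg h, if_neg (by omega)]]
  calc (((n - 1 + ν).choose ν * n.choose (m - ν) *
        (n - 1 + m - μ).choose (m - μ) * n.choose μ : ℕ) : ℚ)
      = (((n+ν-1).choose ν : ℚ) * (n.choose μ : ℚ)) *
          (((n+(m-μ)-1).choose (m-μ) : ℚ) * (n.choose (m-ν) : ℚ)) := by
        rw [show n - 1 + ν = n + ν - 1 by omega, show n - 1 + m - μ = n + (m-μ) - 1 by omega]
        push_cast
        ring
    _ = _ := by rw [← h1, ← h2]; ring
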